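/- The function φ : ℝ → ℝ defined by φ(x) = −3x + √(8x² + 2) is strictly decreasing, is a bijection of ℝ onto ℝ, and satisfies φ(φ(x)) = x for every x ∈ ℝ (so that φ = φ⁻¹). -/
import Mathlib


open Filter Topology

lemma phi_invol (x : ℝ) :
    -3 * (-3 * x + Real.sqrt (8 * x ^ 2 + 2)) +
      Real.sqrt (8 * (-3 * x + Real.sqrt (8 * x ^ 2 + 2)) ^ 2 + 2) = x := by
  set a := Real.sqrt (8 * x ^ 2 + 2) with ha
  have ha2 : a ^ 2 = 8 * x ^ 2 + 2 := Real.sq_sqrt (by positivity)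
  have hann : 0 ≤ a := Real.sqrt_nonneg _
  have hkey : 8 * (-3 * x + a) ^ 2 + 2 = (3 * (-3 * x + a) + x) ^ 2 := by ring_nf; nlinarith [ha2]
  have hpos : 0 ≤ 3 * (-3 * x + a) + x := by
    have h9 : (3 * a) ^ 2 ≥ (8 * x) ^ 2 := by nlinarith [sq_nonneg x]
    have : 3 * a ≥ 8 * x := by
      nlinarith [abs_nonneg x, sq_abs x, le_abs_self x, hann]
    linarith
  rw [hkey, Real.sqrt_sq hpos]
  ring

theorem stmt17 :
    StrictAnti (fun x : ℝ => -3 * x + Real.sqrt (8 * x ^ 2 + 2)) ∧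
      Function.Bijective (fun x : ℝ => -3 * x + Real.sqrt (8 * x ^ 2 + 2)) ∧
      ∀ x : ℝ, (fun x : ℝ => -3 * x + Real.sqrt (8 * x ^ 2 + 2))
          ((fun x : ℝ => -3 * x + Real.sqrt (8 * x ^ 2 + 2)) x) = x := by
  have hinv : Function.Involutive (fun x : ℝ => -3 * x + Real.sqrt (8 * x ^ 2 + 2)) :=
    fun x => phi_invol x
  refine ⟨?_, hinv.bijective, fun x => phi_invol x⟩
  intro x y hxy
  simp only
  set a := Real.sqrt (8 * x ^ 2 + 2) with ha
  set b := Real.sqrt (8 * y ^ 2 + 2) with hb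
  have ha2 : a ^ 2 = 8 * x ^ 2 + 2 := Real.sq_sqrt (by positivity)
  have hb2 : b ^ 2 = 8 * y ^ 2 + 2 := Real.sq_sqrt (by positivity)
  have hann : 0 ≤ a := Real.sqrt_nonneg _
  have hbnn : 0 ≤ b := Real.sqrt_nonneg _
  have h3a : 3 * a > 8 * x := by nlinarith [sq_nonneg x, sq_nonneg (3*a - 8*x), sq_nonneg (3*a + 8*x)]
  have h3b : 3 * b > 8 * y := by nlinarith [sq_nonneg y, sq_nonneg (3*b - 8*y), sq_nonneg (3*b + 8*y)]
  nlinarith [sq_nonneg (a - b), sq_nonneg (a + b), mul_pos (sub_pos.mpr hxy) (add_pos_of_nonneg_of_pos hann (by nlinarith : (0:ℝ) < b))]
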